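/- arXiv:1004.1482 — 8 statements merged into one kernel-verified Lean document; each statement's English description precedes it below -/
import Mathlib

section
/- Let F be a finite field of characteristic 2 with Q elements, let k be an integer with 0 ≤ k ≤ Q-2, and let n > 0 be an integer written as n = (Q-1)·s + r with s ≥ 0 and 0 ≤ r ≤ Q-2. Then, as elements of F, the sum over all nonzero α in F of (1+α)^n · α^(Q-1-k) equals the image in F of the natural number Σ_{j=0}^{s} C(n, (Q-1)·j + k) (equivalently, it is 1 or 0 in F according to whether Σ_{j=0}^{s} C(n, (Q-1)·j + k) is odd or even). -/
/-- Power-sum identity in a finite field of characteristic 2: for `|F| = Q`,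
`0 ≤ k ≤ Q-2`, and `n = (Q-1)s + r > 0` with `0 ≤ r ≤ Q-2`, the sum over nonzero
`α ∈ F` of `(1+α)^n · α^(Q-1-k)` equals the image in `F` of
`∑_{j=0}^{s} C(n, (Q-1)j + k)`. -/
theorem field_power_sum_eq_choose_sum (F : Type*) [Field F] [Fintype F] [DecidableEq F]
    (hchar : CharP F 2) (Q : ℕ) (hQ : Fintype.card F = Q)
    (k n s r : ℕ) (hk : k ≤ Q - 2) (hn : 0 < n) (hr : r ≤ Q - 2)
    (hnsr : n = (Q - 1) * s + r) :
    (∑ α ∈ Finset.univ.filter (fun α : F => α ≠ 0), (1 + α) ^ n * α ^ (Q - 1 - k)) =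
      ((∑ j ∈ Finset.range (s + 1), Nat.choose n ((Q - 1) * j + k) : ℕ) : F) := by
  classical
  haveI := hchar
  have hQ2 : 2 ≤ Q := by rw [← hQ]; exact Fintype.one_lt_card
  set d := Q - 1 with hd
  have hkd : k < d := by omega
  have hrd : r < d := by omega
  have hneg : (-1 : F) = 1 := by rw [CharTwo.neg_eq]
  -- key power-sum lemma
  have key : ∀ m : ℕ, (∑ α ∈ Finset.univ.filter (fun α : F => α ≠ 0), α ^ m)
      = if d ∣ m then (1 : F) else 0 := by
    intro m
    have hmap : (Finset.univ.map ⟨(fun x : Fˣ => (x : F)), fun _ _ h => Units.ext h⟩ : Finset F)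
        = Finset.univ.filter (fun α : F => α ≠ 0) := by
      ext x
      simp only [Finset.mem_map, Finset.mem_univ, Function.Embedding.coeFn_mk, true_and,
        Finset.mem_filter]
      constructor
      · rintro ⟨u, rfl⟩; exact u.ne_zero
      · intro hx; exact ⟨Units.mk0 x hx, rfl⟩
    calc (∑ α ∈ Finset.univ.filter (fun α : F => α ≠ 0), α ^ m)
        = ∑ x : Fˣ, ((x : F)) ^ m := by rw [← hmap, Finset.sum_map]; rfl
      _ = if d ∣ m then (-1 : F) else 0 := by
          have := FiniteField.sum_pow_units F m
          rw [hQ] at this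
          simpa using this
      _ = if d ∣ m then (1 : F) else 0 := by rw [hneg]
  -- binomial expansion
  have hbinom : ∀ α : F, (1 + α) ^ n * α ^ (d - k)
      = ∑ i ∈ Finset.range (n + 1), (n.choose i : F) * α ^ (i + (d - k)) := by
    intro α
    rw [add_comm (1 : F) α, add_pow, Finset.sum_mul]
    refine Finset.sum_congr rfl fun i _ => ?_
    rw [one_pow, pow_add]
    ring
  -- combinatorial identity on ℕ
  have himg : (Finset.range (n + 1)).filter (fun i => d ∣ i + (d - k))
      = ((Finset.range (s + 1)).filter (fun j => d * j + k ≤ n)).image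
          (fun j => d * j + k) := by
    ext i
    simp only [Finset.mem_filter, Finset.mem_range, Finset.mem_image]
    constructor
    · rintro ⟨hin, c, hc⟩
      rcases c with _ | c
      · simp only [Nat.mul_zero] at hc; omega
      · have h3 : d * (c + 1) = d * c + d := by ring
        have hic : i = d * c + k := by omega
        have hcs : c < s + 1 := by
          apply Nat.lt_of_mul_lt_mul_left (a := d)
          have h4 : d * (s + 1) = d * s + d := by ring
          omega
        exact ⟨c, ⟨hcs, by omega⟩, by omega⟩
    · rintro ⟨j, ⟨hjs, hjn⟩, rfl⟩
      refine ⟨by omega, j + 1, ?_⟩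
      have h3 : d * (j + 1) = d * j + d := by ring
      omega
  have hnat : (∑ i ∈ (Finset.range (n + 1)).filter (fun i => d ∣ i + (d - k)), n.choose i)
      = ∑ j ∈ Finset.range (s + 1), n.choose (d * j + k) := by
    rw [himg, Finset.sum_image (fun a _ b _ h => by
      have hd1 : 0 < d := by omega
      exact Nat.eq_of_mul_eq_mul_left hd1 (by omega))]
    apply Finset.sum_filter_of_ne
    intro j _ hne
    by_contra h
    exact hne (Nat.choose_eq_zero_of_lt (by omega))
  calc (∑ α ∈ Finset.univ.filter (fun α : F => α ≠ 0), (1 + α) ^ n * α ^ (d - k))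
      = ∑ α ∈ Finset.univ.filter (fun α : F => α ≠ 0),
          ∑ i ∈ Finset.range (n + 1), (n.choose i : F) * α ^ (i + (d - k)) :=
        Finset.sum_congr rfl fun α _ => hbinom α
    _ = ∑ i ∈ Finset.range (n + 1),
          ∑ α ∈ Finset.univ.filter (fun α : F => α ≠ 0),
            (n.choose i : F) * α ^ (i + (d - k)) := Finset.sum_comm
    _ = ∑ i ∈ Finset.range (n + 1),
          (n.choose i : F) * (if d ∣ i + (d - k) then (1 : F) else 0) := by
        refine Finset.sum_congr rfl fun i _ => ?_
        rw [← Finset.mul_sum, key]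
    _ = ∑ i ∈ (Finset.range (n + 1)).filter (fun i => d ∣ i + (d - k)),
          (n.choose i : F) := by
        rw [Finset.sum_filter]
        refine Finset.sum_congr rfl fun i _ => ?_
        split_ifs <;> simp
    _ = ((∑ i ∈ (Finset.range (n + 1)).filter (fun i => d ∣ i + (d - k)),
          n.choose i : ℕ) : F) := by push_cast; rfl
    _ = _ := by rw [hnat]
end

section
/- Let h ≥ 1, set q = 2^h, and let s be an integer with 1 ≤ s ≤ h. Then the binomial coefficient C(3q - 2^(s-1) - 1, q + 2^(s-1) - 1) is even. -/
/-- For `q = 2^h`, `1 ≤ s ≤ h`, the binomial coefficient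
`C(3q - 2^(s-1) - 1, q + 2^(s-1) - 1)` is even. -/
theorem choose_even_first (h s q : ℕ) (hh : 1 ≤ h) (hq : q = 2 ^ h) (hs1 : 1 ≤ s) (hsh : s ≤ h) :
    Even (Nat.choose (3 * q - 2 ^ (s - 1) - 1) (q + 2 ^ (s - 1) - 1)) := by
  haveI : Fact (Nat.Prime 2) := ⟨Nat.prime_two⟩
  obtain ⟨t, rfl⟩ : ∃ t, s = t + 1 := ⟨s - 1, by omega⟩
  simp only [Nat.add_sub_cancel]
  have hth : t < h := by omega
  have h2t : 2 * 2 ^ t ≤ q := by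
    rw [hq, ← pow_succ']
    exact Nat.pow_le_pow_right (by norm_num) hth
  have hqpos : 2 ≤ q := by
    rw [hq]
    calc 2 = 2 ^ 1 := rfl
    _ ≤ 2 ^ h := Nat.pow_le_pow_right (by norm_num) hh
  have h2tpos : 1 ≤ 2 ^ t := Nat.one_le_two_pow
  have hnd : (3 * q - 2 ^ t - 1) / 2 ^ h = 2 := by
    rw [← hq]
    have e1 : 2 * q ≤ 3 * q - 2 ^ t - 1 := by omega
    have e2 : 3 * q - 2 ^ t - 1 < 3 * q := by omega
    exact Nat.div_eq_of_lt_le e1 e2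
  have hkd : (q + 2 ^ t - 1) / 2 ^ h = 1 := by
    rw [← hq]
    have e1 : 1 * q ≤ q + 2 ^ t - 1 := by omega
    have e2 : q + 2 ^ t - 1 < 2 * q := by omega
    exact Nat.div_eq_of_lt_le e1 e2
  have hmod := Choose.choose_modEq_choose_mul_prod_range_choose
    (n := 3 * q - 2 ^ t - 1) (k := q + 2 ^ t - 1) (p := 2) h
  rw [hnd, hkd] at hmod
  have hdvd : ((2 : ℤ)) ∣ (Nat.choose (3 * q - 2 ^ t - 1) (q + 2 ^ t - 1) : ℤ) := by
    rw [← Int.modEq_zero_iff_dvd]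
    refine hmod.trans ?_
    rw [Int.modEq_zero_iff_dvd]
    norm_num
  exact Int.even_coe_nat _ |>.mp (even_iff_two_dvd.mpr hdvd)
end

section
/- Let h ≥ 1 and let s be an integer with 1 ≤ s ≤ h. Then C(2^(h+2) - 2^s, 2^(h+1)) is odd, while both C(2^(h+2) - 2^s, 2^(h+1) - 1) and C(2^(h+2) - 2^s, 2^(h+1) + 1) are even. -/
open Nat

private instance : Fact (Nat.Prime 2) := ⟨Nat.prime_two⟩

private lemma lucas_step (n k : ℕ) :
    Nat.choose n k % 2 = (Nat.choose (n % 2) (k % 2) * Nat.choose (n / 2) (k / 2)) % 2 :=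
  Choose.choose_modEq_choose_mod_mul_choose_div_nat (p := 2)

private lemma double_step (a b : ℕ) :
    Nat.choose (2 * a) (2 * b) % 2 = Nat.choose a b % 2 := by
  rw [lucas_step]
  simp [Nat.mul_div_cancel_left, Nat.mul_mod_right]

private lemma ones_odd : ∀ m j, j ≤ 2 ^ m - 1 → Nat.choose (2 ^ m - 1) j % 2 = 1 := by
  intro m
  induction m with
  | zero => intro j hj; interval_cases j <;> simp
  | succ m ih =>
    intro j hj
    have h1 : 2 ^ (m + 1) - 1 = 2 * (2 ^ m - 1) + 1 := by
      have : 1 ≤ 2 ^ m := Nat.one_le_two_pow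
      rw [pow_succ]; omega
    rw [h1, lucas_step]
    have hn2 : (2 * (2 ^ m - 1) + 1) % 2 = 1 := by omega
    have hn2' : (2 * (2 ^ m - 1) + 1) / 2 = 2 ^ m - 1 := by omega
    rw [hn2, hn2']
    have hk : Nat.choose 1 (j % 2) = 1 := by
      have : j % 2 ≤ 1 := by omega
      interval_cases h : j % 2 <;> simp
    rw [hk, one_mul]
    apply ih
    have : 1 ≤ 2 ^ m := Nat.one_le_two_pow
    rw [h1] at hj
    omega

private lemma pow_mul_odd : ∀ s a b, Nat.choose (2 ^ s * a) (2 ^ s * b) % 2 = Nat.choose a b % 2 := by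
  intro s
  induction s with
  | zero => simp
  | succ s ih =>
    intro a b
    have : 2 ^ (s + 1) * a = 2 * (2 ^ s * a) := by ring
    rw [this, show 2 ^ (s + 1) * b = 2 * (2 ^ s * b) by ring, double_step, ih]

/-- For `1 ≤ s ≤ h`: `C(2^(h+2) - 2^s, 2^(h+1))` is odd, while
`C(2^(h+2) - 2^s, 2^(h+1) - 1)` and `C(2^(h+2) - 2^s, 2^(h+1) + 1)` are even. -/
theorem choose_parity_triple (h s : ℕ) (hh : 1 ≤ h) (hs1 : 1 ≤ s) (hsh : s ≤ h) :
    Odd (Nat.choose (2 ^ (h + 2) - 2 ^ s) (2 ^ (h + 1))) ∧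
    Even (Nat.choose (2 ^ (h + 2) - 2 ^ s) (2 ^ (h + 1) - 1)) ∧
    Even (Nat.choose (2 ^ (h + 2) - 2 ^ s) (2 ^ (h + 1) + 1)) := by
  set m := h + 2 - s with hm
  have hm2 : 2 ≤ m := by omega
  have hsm : s + m = h + 2 := by omega
  have h1 : 2 ^ (h + 2) - 2 ^ s = 2 ^ s * (2 ^ m - 1) := by
    have : 1 ≤ 2 ^ m := Nat.one_le_two_pow
    rw [Nat.mul_sub, mul_one, ← pow_add, hsm]
  have h2 : 2 ^ (h + 1) = 2 ^ s * 2 ^ (m - 1) := by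
    rw [← pow_add]; congr 1; omega
  -- evenness of n, oddness of the two k's
  have hneven : (2 ^ (h + 2) - 2 ^ s) % 2 = 0 := by
    have e1 : 2 ^ (h + 2) % 2 = 0 := by
      simp [pow_succ, Nat.mul_mod]
    have e2 : 2 ^ s % 2 = 0 := by
      obtain ⟨t, rfl⟩ : ∃ t, s = t + 1 := ⟨s - 1, by omega⟩
      simp [pow_succ, Nat.mul_mod]
    have : 2 ^ s ≤ 2 ^ (h + 2) := Nat.pow_le_pow_right (by norm_num) (by omega)
    omega
  have hpow : 2 ≤ 2 ^ (h + 1) := by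
    calc 2 = 2 ^ 1 := rfl
    _ ≤ 2 ^ (h + 1) := Nat.pow_le_pow_right (by norm_num) (by omega)
  have hkodd1 : (2 ^ (h + 1) - 1) % 2 = 1 := by
    have e1 : 2 ^ (h + 1) % 2 = 0 := by simp [pow_succ, Nat.mul_mod]
    omega
  have hkodd2 : (2 ^ (h + 1) + 1) % 2 = 1 := by
    have e1 : 2 ^ (h + 1) % 2 = 0 := by simp [pow_succ, Nat.mul_mod]
    omega
  refine ⟨?_, ?_, ?_⟩
  · rw [Nat.odd_iff, h1, h2, pow_mul_odd]
    apply ones_odd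
    have h3 : 2 ^ (m - 1) < 2 ^ m := Nat.pow_lt_pow_right (by norm_num) (by omega)
    omega
  · rw [Nat.even_iff, lucas_step, hneven, hkodd1]
    simp
  · rw [Nat.even_iff, lucas_step, hneven, hkodd2]
    simp
end

section
/- Let g ≥ 1, h ≥ 1, s ≥ 0 be integers, set d = 2^(g+h+1) - 2 and N = d·s + 2^(g+h) + 2^(h+1) - 2. Then Σ_{j=0}^{2^(g-1) - 1} C(N, 2^(h+1)·j) + Σ_{l=0}^{s-1} Σ_{j=0}^{2^g - 2} C(N, d·l + 2^(g+h) + 2^(h+1)·(j+1) - 2) ≡ 1 (mod 2). -/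
open Finset

private def c2 (n k : ℕ) : ZMod 2 := (n.choose k : ZMod 2)

private lemma choose_two_pow {t j : ℕ} (h0 : j ≠ 0) (ht : j ≠ 2 ^ t) :
    ((2 ^ t).choose j : ZMod 2) = 0 := by
  have hd : 2 ∣ (2 ^ t).choose j := Nat.Prime.dvd_choose_pow Nat.prime_two h0 ht
  exact (ZMod.natCast_eq_zero_iff _ 2).mpr hd

private lemma c2_shift (a t k : ℕ) :
    c2 (a + 2 ^ t) k = c2 a k + (if 2 ^ t ≤ k then c2 a (k - 2 ^ t) else 0) := by
  have hv : (a + 2 ^ t).choose k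
      = ∑ ij ∈ Finset.HasAntidiagonal.antidiagonal k, (2 ^ t).choose ij.1 * a.choose ij.2 := by
    rw [add_comm]; exact Nat.add_choose_eq _ _ _
  have hcast : c2 (a + 2 ^ t) k
      = ∑ i ∈ range (k + 1), ((2 ^ t).choose i : ZMod 2) * (a.choose (k - i) : ZMod 2) := by
    rw [c2, hv, Finset.Nat.sum_antidiagonal_eq_sum_range_succ_mk]
    push_cast
    rfl
  rw [hcast]
  by_cases h : 2 ^ t ≤ k
  · rw [if_pos h]
    have hsub : ({0, 2 ^ t} : Finset ℕ) ⊆ range (k + 1) := by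
      intro x hx
      simp only [mem_insert, mem_singleton] at hx
      rcases hx with rfl | rfl <;> simp [Nat.lt_succ_iff, h]
    rw [← Finset.sum_subset hsub (by
      intro x hx hnx
      simp only [mem_insert, mem_singleton, not_or] at hnx
      rw [choose_two_pow hnx.1 hnx.2, zero_mul])]
    rw [Finset.sum_pair (by positivity : (0:ℕ) ≠ 2 ^ t)]
    simp [c2]
  · rw [if_neg h, add_zero]
    rw [Finset.sum_eq_single_of_mem 0 (by simp)]
    · simp [c2]
    · intro i hi hne
      have : i ≠ 2 ^ t := by simp only [mem_range] at hi; omega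
      rw [choose_two_pow hne this, zero_mul]

private lemma c2_def (n k : ℕ) : c2 n k = (n.choose k : ZMod 2) := rfl

private lemma c2_ones (t : ℕ) : ∀ k, k < 2 ^ t → c2 (2 ^ t - 1) k = 1 := by
  intro k
  induction k with
  | zero => intro _; simp [c2]
  | succ k ih =>
    intro hk
    have h1 : (2:ℕ) ^ t - 1 + 1 = 2 ^ t := by have := Nat.one_le_two_pow (n := t); omega
    have pascal : (2 ^ t).choose (k + 1)
        = (2 ^ t - 1).choose k + (2 ^ t - 1).choose (k + 1) := by
      conv_lhs => rw [← h1]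
      rw [Nat.choose_succ_succ']
    have h0 : ((2 ^ t).choose (k + 1) : ZMod 2) = 0 :=
      choose_two_pow (Nat.succ_ne_zero k) (by omega)
    have hcast := congrArg (fun m : ℕ => (m : ZMod 2)) pascal
    push_cast at hcast
    rw [h0, ← c2_def, ← c2_def, ih (by omega)] at hcast
    have h2 : c2 (2 ^ t - 1) (k + 1) = -1 := eq_neg_of_add_eq_zero_right hcast.symm
    rw [h2]; decide

private lemma c2_mul_pow_not_dvd (t : ℕ) : ∀ u i : ℕ, ¬ 2 ^ t ∣ i → c2 (2 ^ t * u) i = 0 := by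
  intro u
  induction u with
  | zero =>
    intro i hi
    have : i ≠ 0 := by rintro rfl; exact hi (dvd_zero _)
    simp [c2, Nat.choose_eq_zero_of_lt (Nat.pos_of_ne_zero this)]
  | succ u ih =>
    intro i hi
    rw [show 2 ^ t * (u + 1) = 2 ^ t * u + 2 ^ t by ring, c2_shift, ih i hi]
    split_ifs with hle
    · rw [ih (i - 2 ^ t) (by
        intro hdvd
        have := Nat.dvd_add hdvd (dvd_refl (2 ^ t))
        rw [Nat.sub_add_cancel hle] at this
        exact hi this)]
      simp
    · simp

private lemma c2_mul_pow (t : ℕ) : ∀ u v : ℕ, c2 (2 ^ t * u) (2 ^ t * v) = c2 u v := by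
  intro u
  induction u with
  | zero =>
    intro v
    rcases Nat.eq_zero_or_pos v with rfl | hv
    · simp [c2]
    · simp only [mul_zero, c2]
      rw [Nat.choose_eq_zero_of_lt (by positivity), Nat.choose_eq_zero_of_lt hv]
  | succ u ih =>
    intro v
    rw [show 2 ^ t * (u + 1) = 2 ^ t * u + 2 ^ t by ring, c2_shift,
      show u + 1 = u + 2 ^ 0 by simp, c2_shift, ih v]
    congr 1
    have hpos : 0 < 2 ^ t := Nat.pow_pos (by norm_num)
    by_cases hv : 1 ≤ v
    · rw [if_pos (by calc 2^t = 2^t*1 := (mul_one _).symm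
                       _ ≤ 2^t*v := Nat.mul_le_mul_left _ hv),
        if_pos (by simpa using hv),
        show 2 ^ t * v - 2 ^ t = 2 ^ t * (v - 1) by
          rw [Nat.mul_sub]; omega,
        ih (v - 1)]
      norm_num
    · have hv0 : v = 0 := by omega
      subst hv0
      rw [if_neg (by simpa using hpos), if_neg (by simp)]

private lemma sum_support (F : ℕ → ZMod 2) (n M u : ℕ) (hM : 0 < M) (hn : M * u < n)
    (h : ∀ i, i < n → F i ≠ 0 → ∃ j, j ≤ u ∧ i = M * j) :
    ∑ i ∈ range n, F i = ∑ j ∈ range (u + 1), F (M * j) := by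
  have hinj : ∀ x ∈ range (u + 1), ∀ y ∈ range (u + 1), M * x = M * y → x = y := by
    intro a _ b _ hab
    exact Nat.eq_of_mul_eq_mul_left hM hab
  have himg : ∑ x ∈ (range (u + 1)).image (fun j => M * j), F x
      = ∑ j ∈ range (u + 1), F (M * j) := Finset.sum_image hinj
  rw [← himg]
  apply (Finset.sum_subset _ _).symm
  · intro x hx
    simp only [Finset.mem_image, mem_range] at hx ⊢
    obtain ⟨j, hj, rfl⟩ := hx
    calc M * j ≤ M * u := Nat.mul_le_mul_left _ (by omega)
    _ < n := hn
  · intro x hx hnx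
    by_contra hF
    obtain ⟨j, hj, rfl⟩ := h x (mem_range.mp hx) hF
    exact hnx (Finset.mem_image.mpr ⟨j, mem_range.mpr (by omega), rfl⟩)

/-- Key block identity: `∑_{j < 2^r} C(a, c0 + 2^t j) ≡ C(2^t(2^r-1) + a, c0 + 2^t(2^r-1))`. -/
private lemma block (a r t c0 : ℕ) :
    c2 (2 ^ t * (2 ^ r - 1) + a) (c0 + 2 ^ t * (2 ^ r - 1))
      = ∑ j ∈ range (2 ^ r), c2 a (c0 + 2 ^ t * j) := by
  have h2t : (0:ℕ) < 2 ^ t := by positivity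
  have h2r : (0:ℕ) < 2 ^ r := by positivity
  have hcast : c2 (2 ^ t * (2 ^ r - 1) + a) (c0 + 2 ^ t * (2 ^ r - 1))
      = ∑ i ∈ range (c0 + 2 ^ t * (2 ^ r - 1) + 1),
          ((2 ^ t * (2 ^ r - 1)).choose i : ZMod 2)
            * (a.choose (c0 + 2 ^ t * (2 ^ r - 1) - i) : ZMod 2) := by
    rw [c2, Nat.add_choose_eq, Finset.Nat.sum_antidiagonal_eq_sum_range_succ_mk]
    push_cast
    rfl
  rw [hcast, sum_support _ _ (2 ^ t) (2 ^ r - 1) h2t (by omega)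
    (by
      intro i _ hF
      by_cases hdvd : 2 ^ t ∣ i
      · obtain ⟨j, rfl⟩ := hdvd
        refine ⟨j, ?_, rfl⟩
        by_contra hj
        have hlt : 2 ^ t * (2 ^ r - 1) < 2 ^ t * j :=
          mul_lt_mul_of_pos_left (by omega) h2t
        rw [Nat.choose_eq_zero_of_lt hlt] at hF
        simp at hF
      · have h0 := c2_mul_pow_not_dvd t (2 ^ r - 1) i hdvd
        rw [c2_def] at h0
        rw [h0] at hF
        simp at hF)]
  have hones : ∀ j, j ≤ 2 ^ r - 1 →
      (((2 ^ t * (2 ^ r - 1)).choose (2 ^ t * j)) : ZMod 2) = 1 := by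
    intro j hj
    rw [← c2_def, c2_mul_pow, c2_ones r j (by omega)]
  calc ∑ j ∈ range (2 ^ r - 1 + 1),
        ((2 ^ t * (2 ^ r - 1)).choose (2 ^ t * j) : ZMod 2)
          * (a.choose (c0 + 2 ^ t * (2 ^ r - 1) - 2 ^ t * j) : ZMod 2)
      = ∑ j ∈ range (2 ^ r - 1 + 1), (a.choose (c0 + 2 ^ t * ((2 ^ r - 1) - j)) : ZMod 2) := by
        apply Finset.sum_congr rfl
        intro j hj
        have hj' : j ≤ 2 ^ r - 1 := by have := mem_range.mp hj; omega
        rw [hones j hj', one_mul]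
        have hmul : 2 ^ t * (2 ^ r - 1 - j) = 2 ^ t * (2 ^ r - 1) - 2 ^ t * j :=
          Nat.mul_sub _ _ _
        have hle : 2 ^ t * j ≤ 2 ^ t * (2 ^ r - 1) := Nat.mul_le_mul_left _ hj'
        have harg : c0 + 2 ^ t * (2 ^ r - 1) - 2 ^ t * j = c0 + 2 ^ t * (2 ^ r - 1 - j) := by
          rw [hmul]; omega
        rw [harg]
    _ = ∑ j ∈ range (2 ^ r), c2 a (c0 + 2 ^ t * j) := by
        rw [show 2 ^ r - 1 + 1 = 2 ^ r by omega]
        exact Finset.sum_range_reflect (fun j => (a.choose (c0 + 2 ^ t * j) : ZMod 2)) (2 ^ r)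

private lemma c2_zero_of_lt {n k : ℕ} (h : n < k) : c2 n k = 0 := by
  rw [c2_def, Nat.choose_eq_zero_of_lt h]; simp

private lemma phi (P K n : ℕ) (hP : P = 2 ^ n) (hP4 : 4 ≤ P) (hK : K ≤ P) :
    ∀ s : ℕ,
      (∑ l ∈ range (s + 1), c2 ((2 * P - 2) * s + P - 2) ((2 * P - 2) * l + K))
        + (∑ l ∈ range s, c2 ((2 * P - 2) * s + P - 2) ((2 * P - 2) * l + P - 2))
      = c2 (P - 2) K := by
  intro s
  induction s with
  | zero => simp
  | succ s ih =>
    rw [← ih]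
    set d : ℕ := 2 * P - 2 with hd
    set R : ℕ := d * s + P - 4 with hR
    have h2P : (2:ℕ) ^ (n + 1) = 2 * P := by rw [hP]; ring
    have hds : d * (s + 1) = d * s + d := by ring
    have hrow1 : d * (s + 1) + P - 2 = R + 2 ^ (n + 1) := by rw [h2P]; omega
    have hrow2 : d * s + P - 2 = R + 2 ^ 1 := by omega
    -- normal form pieces
    have hL1 : ∑ l ∈ range (s + 1 + 1), c2 (d * (s + 1) + P - 2) (d * l + K)
        = (∑ l ∈ range (s + 1), c2 R (d * l + K))
          + (∑ l ∈ range (s + 1), if 2 ≤ d * l + K then c2 R (d * l + K - 2) else 0) := by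
      have e1 : ∀ l ∈ range (s + 1 + 1), c2 (d * (s + 1) + P - 2) (d * l + K)
          = c2 R (d * l + K)
            + (if 2 ^ (n+1) ≤ d * l + K then c2 R (d * l + K - 2 ^ (n+1)) else 0) := by
        intro l _
        rw [hrow1, c2_shift]
      rw [Finset.sum_congr rfl e1, Finset.sum_add_distrib]
      congr 1
      · rw [Finset.sum_range_succ, c2_zero_of_lt (by
          have hd1 : d * (s + 1) = d * s + d := by ring
          omega), add_zero]
      · rw [Finset.sum_range_succ']
        rw [if_neg (by omega : ¬ 2 ^ (n+1) ≤ d * 0 + K), add_zero]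
        apply Finset.sum_congr rfl
        intro l _
        have hdl : d * (l + 1) = d * l + d := by ring
        by_cases hc : 2 ≤ d * l + K
        · rw [if_pos (by omega), if_pos hc]
          congr 1
          omega
        · rw [if_neg (by omega), if_neg hc]
    have hL2 : ∑ l ∈ range (s + 1), c2 (d * (s + 1) + P - 2) (d * l + P - 2)
        = (∑ l ∈ range s, c2 R (d * l + P - 2))
          + (∑ l ∈ range s, c2 R (d * l + P - 4)) := by
      have e1 : ∀ l ∈ range (s + 1), c2 (d * (s + 1) + P - 2) (d * l + P - 2)
          = c2 R (d * l + P - 2)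
            + (if 2 ^ (n+1) ≤ d * l + P - 2 then c2 R (d * l + P - 2 - 2 ^ (n+1)) else 0) := by
        intro l _
        rw [hrow1, c2_shift]
      rw [Finset.sum_congr rfl e1, Finset.sum_add_distrib]
      congr 1
      · rw [Finset.sum_range_succ, c2_zero_of_lt (by omega : R < d * s + P - 2), add_zero]
      · rw [Finset.sum_range_succ']
        rw [if_neg (by omega : ¬ 2 ^ (n+1) ≤ d * 0 + P - 2), add_zero]
        apply Finset.sum_congr rfl
        intro l _
        have hdl : d * (l + 1) = d * l + d := by ring
        rw [if_pos (by omega)]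
        congr 1
        omega
    have hR1 : ∑ l ∈ range (s + 1), c2 (d * s + P - 2) (d * l + K)
        = (∑ l ∈ range (s + 1), c2 R (d * l + K))
          + (∑ l ∈ range (s + 1), if 2 ≤ d * l + K then c2 R (d * l + K - 2) else 0) := by
      have e1 : ∀ l ∈ range (s + 1), c2 (d * s + P - 2) (d * l + K)
          = c2 R (d * l + K) + (if 2 ≤ d * l + K then c2 R (d * l + K - 2) else 0) := by
        intro l _
        rw [hrow2, c2_shift]
        norm_num
      rw [Finset.sum_congr rfl e1, Finset.sum_add_distrib]
    have hR2 : ∑ l ∈ range s, c2 (d * s + P - 2) (d * l + P - 2)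
        = (∑ l ∈ range s, c2 R (d * l + P - 2))
          + (∑ l ∈ range s, c2 R (d * l + P - 4)) := by
      have e1 : ∀ l ∈ range s, c2 (d * s + P - 2) (d * l + P - 2)
          = c2 R (d * l + P - 2) + c2 R (d * l + P - 4) := by
        intro l _
        rw [hrow2, c2_shift]
        rw [if_pos (by omega : 2 ^ 1 ≤ d * l + P - 2),
          show d * l + P - 2 - 2 ^ 1 = d * l + P - 4 by omega]
      rw [Finset.sum_congr rfl e1, Finset.sum_add_distrib]
    rw [hL1, hL2, hR1, hR2]

private lemma base_val (n h : ℕ) (hh : 1 ≤ h) (hn : h + 1 ≤ n) :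
    c2 (2 ^ n - 2) (2 ^ n - 2 ^ (h + 1)) = 1 := by
  have h1 : (2:ℕ) ^ n = 2 * 2 ^ (n - 1) := by
    conv_lhs => rw [show n = (n - 1) + 1 by omega, pow_succ]
    ring
  have h2 : (2:ℕ) ^ (h + 1) = 2 * 2 ^ h := by rw [pow_succ]; ring
  have h3 : (2:ℕ) ^ h ≤ 2 ^ (n - 1) := Nat.pow_le_pow_right (by norm_num) (by omega)
  have h4 : (1:ℕ) ≤ 2 ^ h := Nat.one_le_two_pow
  have e1 : 2 ^ n - 2 = 2 ^ 1 * (2 ^ (n - 1) - 1) := by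
    rw [Nat.mul_sub]; omega
  have e2 : 2 ^ n - 2 ^ (h + 1) = 2 ^ 1 * (2 ^ (n - 1) - 2 ^ h) := by
    rw [Nat.mul_sub]; omega
  rw [e1, e2, c2_mul_pow]
  exact c2_ones (n - 1) _ (by omega)

/-- For `g, h ≥ 1`, `s ≥ 0`, `d = 2^(g+h+1) - 2` and `N = ds + 2^(g+h) + 2^(h+1) - 2`:
`∑_{j=0}^{2^(g-1)-1} C(N, 2^(h+1) j)
 + ∑_{l=0}^{s-1} ∑_{j=0}^{2^g-2} C(N, dl + 2^(g+h) + 2^(h+1)(j+1) - 2) ≡ 1 (mod 2)`. -/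
theorem S_sum_odd (g h s d N : ℕ) (hg : 1 ≤ g) (hh : 1 ≤ h)
    (hd : d = 2 ^ (g + h + 1) - 2) (hN : N = d * s + 2 ^ (g + h) + 2 ^ (h + 1) - 2) :
    (∑ j ∈ Finset.range (2 ^ (g - 1)), Nat.choose N (2 ^ (h + 1) * j)) +
      (∑ l ∈ Finset.range s, ∑ j ∈ Finset.range (2 ^ g - 1),
        Nat.choose N (d * l + 2 ^ (g + h) + 2 ^ (h + 1) * (j + 1) - 2)) ≡ 1 [MOD 2] := by
  set P : ℕ := 2 ^ (g + h) with hP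
  set M : ℕ := 2 ^ (h + 1) with hM
  -- power facts
  have hpow1 : (2:ℕ) ^ (g + h + 1) = 2 * P := by rw [hP, pow_succ]; ring
  have hpow2 : M * 2 ^ (g - 1) = P := by
    rw [hM, hP, ← pow_add]
    congr 1
    omega
  have hpow3 : M * 2 ^ g = 2 * P := by
    rw [hM, hP, ← pow_add, ← pow_succ']
    congr 1
    omega
  have hg1 : (1:ℕ) ≤ 2 ^ (g - 1) := Nat.one_le_two_pow
  have hg2 : (1:ℕ) ≤ 2 ^ g := Nat.one_le_two_pow
  have hMP : M ≤ P := by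
    calc M = M * 1 := (mul_one M).symm
    _ ≤ M * 2 ^ (g - 1) := Nat.mul_le_mul_left _ hg1
    _ = P := hpow2
  have hM4 : 4 ≤ M := by
    calc (4:ℕ) = 2 ^ 2 := by norm_num
    _ ≤ 2 ^ (h + 1) := Nat.pow_le_pow_right (by norm_num) (by omega)
  have hP4 : 4 ≤ P := le_trans hM4 hMP
  set V : ℕ := d * s + P - 2 with hV
  set K : ℕ := P - M with hK
  have hd2 : d = 2 * P - 2 := by omega
  have hKeq : M * (2 ^ (g - 1) - 1) = K := by rw [Nat.mul_sub]; omega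
  have hWeq : M * (2 ^ g - 1) = 2 * P - M := by rw [Nat.mul_sub]; omega
  have hNV : N = V + M := by omega
  -- to ZMod 2
  apply (ZMod.natCast_eq_natCast_iff _ _ 2).mp
  push_cast
  simp only [← c2_def]
  -- Step A
  have hA : (∑ j ∈ range (2 ^ (g - 1)), c2 N (M * j)) = c2 V K := by
    have hb := block N (g - 1) (h + 1) 0
    simp only [zero_add, ← hM] at hb
    rw [hKeq] at hb
    rw [← hb]
    have hKN : K + N = V + 2 ^ (g + h) := by omega
    rw [hKN, c2_shift, if_neg (by omega), add_zero]
  -- Step B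
  have hB : ∀ l, (∑ j ∈ range (2 ^ g - 1), c2 N ((d * l + P - 2) + M * (j + 1)))
      = c2 V (d * (l + 1) + K) + c2 V (d * l + P - 2) := by
    intro l
    have hb := block N g (h + 1) (d * l + P - 2)
    simp only [← hM] at hb
    rw [hWeq] at hb
    rw [show (2:ℕ) ^ g = (2 ^ g - 1) + 1 by omega, Finset.sum_range_succ'] at hb
    simp only [mul_zero, add_zero] at hb
    have hsum : (∑ j ∈ range (2 ^ g - 1), c2 N ((d * l + P - 2) + M * (j + 1)))
        = c2 (2 * P - M + N) ((d * l + P - 2) + (2 * P - M)) - c2 N (d * l + P - 2) :=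
      eq_sub_of_add_eq hb.symm
    rw [CharTwo.sub_eq_add] at hsum
    rw [hsum]
    have hXrow : 2 * P - M + N = V + 2 ^ (g + h + 1) := by omega
    have hXarg : (d * l + P - 2) + (2 * P - M) = d * (l + 1) + K := by
      have : d * (l + 1) = d * l + d := by ring
      omega
    rw [hXrow, hXarg, c2_shift, hNV, hM, c2_shift, ← hM]
    have hite : (if 2 ^ (g + h + 1) ≤ d * (l + 1) + K then c2 V (d * (l + 1) + K - 2 ^ (g + h + 1)) else 0)
        = (if M ≤ d * l + P - 2 then c2 V (d * l + P - 2 - M) else 0) := by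
      have hdl : d * (l + 1) = d * l + d := by ring
      by_cases hc : M ≤ d * l + P - 2
      · rw [if_pos (by omega), if_pos hc]
        congr 1
        omega
      · rw [if_neg (by omega), if_neg hc]
    rw [hite]
    have key : ∀ x y a : ZMod 2, x + a + (y + a) = x + y := by decide
    exact key _ _ _
  -- rewrite inner indices
  have hidx : ∀ l, (∑ j ∈ range (2 ^ g - 1), c2 N (d * l + P + M * (j + 1) - 2))
      = ∑ j ∈ range (2 ^ g - 1), c2 N ((d * l + P - 2) + M * (j + 1)) := by
    intro l
    apply Finset.sum_congr rfl
    intro j _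
    congr 1
    omega
  calc (∑ j ∈ range (2 ^ (g - 1)), c2 N (M * j))
        + ∑ l ∈ range s, ∑ j ∈ range (2 ^ g - 1), c2 N (d * l + P + M * (j + 1) - 2)
      = c2 V K + ∑ l ∈ range s, (c2 V (d * (l + 1) + K) + c2 V (d * l + P - 2)) := by
        rw [hA]
        congr 1
        apply Finset.sum_congr rfl
        intro l _
        rw [hidx l, hB l]
    _ = (∑ l ∈ range (s + 1), c2 V (d * l + K)) + ∑ l ∈ range s, c2 V (d * l + P - 2) := by
        rw [Finset.sum_add_distrib, Finset.sum_range_succ']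
        simp only [mul_zero, zero_add]
        ring
    _ = 1 := by
        rw [hV, hd2]
        rw [phi P K (g + h) hP hP4 (by omega) s]
        exact base_val (g + h) h hh (by omega)
end

section
/- Let g ≥ 1, h ≥ 1, s ≥ 1 be integers and set d = 2^(g+h+1) - 2. Then Σ_{l=1}^{s} Σ_{j=1}^{2^g - 2} C(d·s + 2^(h+1) - 1, d·l - 2^(h+1)·j) ≡ 0 (mod 2). (For the indicated ranges of l and j the lower entry d·l - 2^(h+1)·j is a positive integer.) -/
/-- A binomial coefficient `C(even, odd)` is even. -/
lemma even_choose_aux {n k : ℕ} (hn : 2 ∣ n) (hk : k % 2 = 1) : 2 ∣ n.choose k := by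
  rcases Nat.eq_zero_or_pos n with rfl | hpos
  · simp [Nat.choose_eq_zero_of_lt (show 0 < k by omega)]
  · have h1 : n - 1 + 1 = n := by omega
    have h2 : k - 1 + 1 = k := by omega
    have := Nat.add_one_mul_choose_eq (n - 1) (k - 1)
    rw [h1, h2] at this
    have hdvd : 2 ∣ n.choose k * k := by rw [← this]; exact hn.mul_right _
    rcases (Nat.prime_two.dvd_mul.mp hdvd) with h | h
    · exact h
    · omega

/-- For `g, h, s ≥ 1` and `d = 2^(g+h+1) - 2`:
`∑_{l=1}^{s} ∑_{j=1}^{2^g-2} C(ds + 2^(h+1) - 1, dl - 2^(h+1) j) ≡ 0 (mod 2)`. -/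
theorem double_sum_choose_even_two (g h s d : ℕ) (hg : 1 ≤ g) (hh : 1 ≤ h) (hs : 1 ≤ s)
    (hd : d = 2 ^ (g + h + 1) - 2) :
    (∑ l ∈ Finset.Icc 1 s, ∑ j ∈ Finset.Icc 1 (2 ^ g - 2),
      Nat.choose (d * s + 2 ^ (h + 1) - 1) (d * l - 2 ^ (h + 1) * j)) ≡ 0 [MOD 2] := by
  set A := 2 ^ g with hA
  set B := 2 ^ (h + 1) with hB
  have hB2 : 4 ≤ B := by
    rw [hB]; calc (4:ℕ) = 2 ^ 2 := rfl
    _ ≤ 2 ^ (h + 1) := Nat.pow_le_pow_right (by norm_num) (by omega)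
  have hA2 : 2 ≤ A := by
    rw [hA]; calc (2:ℕ) = 2 ^ 1 := rfl
    _ ≤ 2 ^ g := Nat.pow_le_pow_right (by norm_num) hg
  have hAB : d + 2 = A * B := by
    rw [hd, hA, hB, ← pow_add, show g + (h + 1) = g + h + 1 from by omega]
    have : 2 ≤ 2 ^ (g + h + 1) := by
      calc (2:ℕ) = 2 ^ 1 := rfl
      _ ≤ 2 ^ (g + h + 1) := Nat.pow_le_pow_right (by norm_num) (by omega)
    omega
  have hdeven : 2 ∣ d := by
    have : 2 ∣ A * B := ⟨A * 2 ^ h, by rw [hB, pow_succ]; ring⟩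
    omega
  have hBeven : 2 ∣ B := ⟨2 ^ h, by rw [hB, pow_succ]; ring⟩
  -- key bound: for 1 ≤ l', 1 ≤ j' ≤ A - 2 we have B * j' ≤ d * l'
  have key : ∀ l' j' : ℕ, 1 ≤ l' → 1 ≤ j' → j' ≤ A - 2 → B * j' + 2 ≤ d * l' := by
    intro l' j' hl' hj' hj2
    have h1 : B * j' ≤ B * (A - 2) := Nat.mul_le_mul_left B hj2
    have h2 : B * (A - 2) + 2 * B = B * A := by
      have : A - 2 + 2 = A := by omega
      calc B * (A - 2) + 2 * B = B * ((A - 2) + 2) := by ring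
      _ = B * A := by rw [this]
    have h3 : d ≤ d * l' := Nat.le_mul_of_pos_right d (by omega)
    have h4 : B * A = A * B := by ring
    omega
  rw [Nat.modEq_zero_iff_dvd, ← ZMod.natCast_eq_zero_iff _ 2]
  push_cast
  rw [← Finset.sum_product']
  apply Finset.sum_involution
    (fun p _ => ((s + 1 - p.1, A - 1 - p.2) : ℕ × ℕ))
  · -- pair sums vanish
    rintro ⟨l, j⟩ hmem
    simp only [Finset.mem_product, Finset.mem_Icc] at hmem
    obtain ⟨⟨hl1, hl2⟩, hj1, hj2⟩ := hmem
    simp only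
    set n := d * s + B - 1 with hn
    set k1 := d * l - B * j with hk1
    set k2 := d * (s + 1 - l) - B * (A - 1 - j) with hk2
    have hbd1 : B * j + 2 ≤ d * l := key l j hl1 hj1 hj2
    have hbd2 : B * (A - 1 - j) + 2 ≤ d * (s + 1 - l) := by
      apply key <;> omega
    have hsum : k1 + k2 = d * s + B - 2 := by
      have hls : l ≤ s + 1 := by omega
      have hja : j ≤ A - 1 := by omega
      have h2 : 2 ≤ d * s + B := by
        have : d * 1 ≤ d * s := Nat.mul_le_mul_left d hs
        omega
      rw [hk1, hk2]
      zify [hls, hja, h2, (by omega : 2 ≤ B), (by omega : 1 ≤ A),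
        (by omega : B * j ≤ d * l), (by omega : B * (A - 1 - j) ≤ d * (s + 1 - l))]
      have hABz : (d : ℤ) + 2 = A * B := by exact_mod_cast hAB
      linear_combination hABz
    have hk1n : k1 ≤ n := by omega
    have hnk1 : n - k1 = k2 + 1 := by omega
    have hk1e : 2 ∣ k1 := Nat.dvd_sub (hdeven.mul_right l) (hBeven.mul_right j)
    have hk2e : 2 ∣ k2 := Nat.dvd_sub (hdeven.mul_right _) (hBeven.mul_right _)
    -- C(n, k1) = C(n, n - k1) = C(n, k2 + 1), and C(n,k2)+C(n,k2+1) = C(n+1,k2+1) even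
    have hsymm : n.choose k1 = n.choose (k2 + 1) := by
      rw [← hnk1, Nat.choose_symm hk1n]
    have hpasc : (n + 1).choose (k2 + 1) = n.choose k2 + n.choose (k2 + 1) :=
      Nat.choose_succ_succ n k2
    have heven : 2 ∣ (n + 1).choose (k2 + 1) := by
      apply even_choose_aux
      · have : n + 1 = d * s + B := by omega
        rw [this]; exact Nat.dvd_add (hdeven.mul_right s) hBeven
      · omega
    have : 2 ∣ n.choose k1 + n.choose k2 := by
      rw [hsymm]; omega
    obtain ⟨c, hc⟩ := this
    have : ((n.choose k1 + n.choose k2 : ℕ) : ZMod 2) = 0 := by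
      rw [hc]; push_cast
      rw [show ((2 : ZMod 2)) = 0 by decide, zero_mul]
    push_cast at this
    linear_combination this
  · -- no fixed point needed: the map never fixes a point
    rintro ⟨l, j⟩ hmem _
    simp only [Finset.mem_product, Finset.mem_Icc] at hmem
    obtain ⟨⟨hl1, hl2⟩, hj1, hj2⟩ := hmem
    have hAe : 2 ∣ A := by
      rw [hA]; exact dvd_pow_self 2 (by omega)
    intro hcon
    have h2 := congrArg Prod.snd hcon
    simp only at h2
    omega
  · -- maps into the set
    rintro ⟨l, j⟩ hmem
    simp only [Finset.mem_product, Finset.mem_Icc] at hmem ⊢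
    omega
  · -- involution
    rintro ⟨l, j⟩ hmem
    simp only [Finset.mem_product, Finset.mem_Icc] at hmem
    have : s + 1 - (s + 1 - l) = l := by omega
    have : A - 1 - (A - 1 - j) = j := by omega
    simp only [Prod.mk.injEq]
    omega
end

section
/- Let h ≥ 1, set q = 2^h, and let s be an integer with 1 ≤ s ≤ h. Then C(6q - 3, 2^s) + C(6q - 3, 2q + 2^s - 1) + C(6q - 3, 4q + 2^s - 2) ≡ 1 (mod 2). -/
lemma lucas_parity : ∀ n k : ℕ, Nat.choose n k % 2 = 1 ↔
    ∀ i, k.testBit i = true → n.testBit i = true := by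
  intro n
  induction n using Nat.strong_induction_on with
  | _ n ih =>
    intro k
    rcases Nat.eq_zero_or_pos n with rfl | hn
    · constructor
      · intro hc i hki
        rcases Nat.eq_zero_or_pos k with rfl | hk
        · simpa using hki
        · rw [Nat.choose_eq_zero_of_lt hk] at hc; simp at hc
      · intro H
        have hk0 : k = 0 := by
          apply Nat.eq_of_testBit_eq
          intro i
          simp only [Nat.zero_testBit]
          by_contra hne
          have : k.testBit i = true := by
            cases hki : k.testBit i
            · simp [hki] at hne
            · rfl
          have := H i this
          simp at this
        subst hk0; simp
    · haveI : Fact (Nat.Prime 2) := ⟨Nat.prime_two⟩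
      have key : Nat.choose n k % 2 =
          (Nat.choose (n % 2) (k % 2) * Nat.choose (n / 2) (k / 2)) % 2 :=
        Choose.choose_modEq_choose_mod_mul_choose_div_nat (p := 2)
      have hsplit : (∀ i, k.testBit i = true → n.testBit i = true) ↔
          ((k % 2 = 1 → n % 2 = 1) ∧
            ∀ i, (k / 2).testBit i = true → (n / 2).testBit i = true) := by
        constructor
        · intro H
          refine ⟨fun hk => ?_, fun i hi => ?_⟩
          · have := H 0 (by simp [Nat.testBit_zero, hk])
            simpa using this
          · have := H (i + 1) (by rwa [← Nat.testBit_div_two])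
            rwa [Nat.testBit_div_two]
        · rintro ⟨H0, H⟩ i hi
          cases i with
          | zero => simp only [Nat.testBit_zero, decide_eq_true_eq] at hi ⊢; exact H0 hi
          | succ i =>
            rw [← Nat.testBit_div_two] at hi ⊢
            exact H i hi
      have ihd := ih (n / 2) (Nat.div_lt_self hn one_lt_two) (k / 2)
      rcases Nat.mod_two_eq_zero_or_one n with hn2 | hn2 <;>
        rcases Nat.mod_two_eq_zero_or_one k with hk2 | hk2 <;>
          rw [hn2, hk2] at key <;> simp at key
      · rw [key, hsplit, ihd]
        simp [hk2]
      · rw [key, hsplit]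
        simp [hn2, hk2]
      · rw [key, hsplit, ihd]
        simp [hn2, hk2]
      · rw [key, hsplit, ihd]
        simp [hn2, hk2]


lemma bitN (h j : ℕ) (hh : 1 ≤ h) :
    (6 * 2 ^ h - 3).testBit j =
      (decide (j = 0) || (decide (2 ≤ j) && decide (j ≤ h)) || decide (j = h + 2)) := by
  have h1 : (2:ℕ) ^ h = 2 ^ (h - 1) * 2 := by
    rw [← pow_succ]; congr 1; omega
  have h2 : (1:ℕ) ≤ 2 ^ (h - 1) := Nat.one_le_two_pow
  have e1 : 6 * 2 ^ h - 3 = 2 ^ (h + 1) * 2 + (2 ^ (h + 1) - 3) := by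
    rw [pow_succ, h1]; ring_nf; omega
  rw [e1, Nat.testBit_two_pow_mul_add _ (by rw [pow_succ, h1]; omega)]
  by_cases hj : j < h + 1
  · simp only [hj, if_true]
    have e2 : 2 ^ (h + 1) - 3 = 2 ^ 2 * (2 ^ (h - 1) - 1) + 1 := by
      rw [pow_succ, h1]; omega
    rw [e2, Nat.testBit_two_pow_mul_add _ (by norm_num)]
    by_cases hj2 : j < 2
    · interval_cases j
      · simp
      · have h12 : ¬ (1 = h + 2) := by omega
        simp [h12, Nat.testBit_succ]
    · simp only [hj2, if_false]
      rw [Nat.testBit_two_pow_sub_one]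
      have : ¬ (j = 0) := by omega
      have : ¬ (j = h + 2) := by omega
      simp_all
      omega
  · simp only [hj, if_false]
    have : (2:ℕ) = 2 ^ 1 := rfl
    rw [this, Nat.testBit_two_pow]
    have h0 : ¬ (j = 0) := by omega
    have h2' : ¬ (j ≤ h) := by omega
    simp [h0, h2']
    omega

/-- For `q = 2^h`, `1 ≤ s ≤ h`:
`C(6q-3, 2^s) + C(6q-3, 2q + 2^s - 1) + C(6q-3, 4q + 2^s - 2) ≡ 1 (mod 2)`. -/
theorem three_choose_sum_odd (h s q : ℕ) (hh : 1 ≤ h) (hq : q = 2 ^ h)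
    (hs1 : 1 ≤ s) (hsh : s ≤ h) :
    Nat.choose (6 * q - 3) (2 ^ s) + Nat.choose (6 * q - 3) (2 * q + 2 ^ s - 1) +
      Nat.choose (6 * q - 3) (4 * q + 2 ^ s - 2) ≡ 1 [MOD 2] := by
  subst hq
  have hps : (1:ℕ) ≤ 2 ^ s := Nat.one_le_two_pow
  have hps' : (2:ℕ) ≤ 2 ^ s := by
    calc (2:ℕ) = 2 ^ 1 := rfl
    _ ≤ 2 ^ s := Nat.pow_le_pow_right (by norm_num) hs1
  -- term 2 is always even
  have e2 : 2 * 2 ^ h + 2 ^ s - 1 = 2 ^ s * 2 ^ (h + 1 - s) + (2 ^ s - 1) := by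
    have e : 2 ^ s * 2 ^ (h + 1 - s) = 2 * 2 ^ h := by
      rw [← pow_add]
      have hs' : s + (h + 1 - s) = h + 1 := by omega
      rw [hs', pow_succ]; ring
    omega
  have t2 : Nat.choose (6 * 2 ^ h - 3) (2 * 2 ^ h + 2 ^ s - 1) % 2 = 0 := by
    have hne : Nat.choose (6 * 2 ^ h - 3) (2 * 2 ^ h + 2 ^ s - 1) % 2 ≠ 1 := by
      intro H
      rw [lucas_parity] at H
      have hb : (2 * 2 ^ h + 2 ^ s - 1).testBit (h + 1) = true := by
        rw [e2, Nat.testBit_two_pow_mul_add _ (by omega)]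
        have : ¬ (h + 1 < s) := by omega
        simp only [this, if_false]
        rw [Nat.testBit_two_pow]
        simp
      have := H _ hb
      rw [bitN _ _ hh] at this
      simp at this
    omega
  by_cases hs : s = 1
  · -- s = 1 : terms 1 and 3
    subst hs
    have t1 : Nat.choose (6 * 2 ^ h - 3) (2 ^ 1) % 2 = 0 := by
      have hne : Nat.choose (6 * 2 ^ h - 3) (2 ^ 1) % 2 ≠ 1 := by
        intro H
        rw [lucas_parity] at H
        have := H 1 (by rw [Nat.testBit_two_pow]; simp)
        rw [bitN _ _ hh] at this
        simp at this
      omega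
    have e3 : 4 * 2 ^ h + 2 ^ 1 - 2 = 2 ^ (h + 2) := by
      rw [pow_add]; ring_nf; omega
    have t3 : Nat.choose (6 * 2 ^ h - 3) (4 * 2 ^ h + 2 ^ 1 - 2) % 2 = 1 := by
      rw [e3, lucas_parity]
      intro i hi
      rw [Nat.testBit_two_pow] at hi
      simp at hi
      rw [bitN _ _ hh]
      simp [← hi]
    unfold Nat.ModEq
    omega
  · -- 2 ≤ s : term 1 odd, term 3 even
    have hs2 : 2 ≤ s := by omega
    have t1 : Nat.choose (6 * 2 ^ h - 3) (2 ^ s) % 2 = 1 := by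
      rw [lucas_parity]
      intro i hi
      rw [Nat.testBit_two_pow] at hi
      simp at hi
      rw [bitN _ _ hh]
      subst hi
      simp [hs2, hsh]
    have e3 : 4 * 2 ^ h + 2 ^ s - 2 = 2 ^ s * 2 ^ (h + 2 - s) + (2 ^ s - 2) := by
      have e : 2 ^ s * 2 ^ (h + 2 - s) = 4 * 2 ^ h := by
        rw [← pow_add]
        have hs' : s + (h + 2 - s) = h + 2 := by omega
        rw [hs', pow_add]; ring
      omega
    have e4 : 2 ^ s - 2 = 2 ^ 1 * (2 ^ (s - 1) - 1) + 0 := by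
      have : 2 ^ s = 2 * 2 ^ (s - 1) := by
        rw [← pow_succ']
        congr 1; omega
      have : (1:ℕ) ≤ 2 ^ (s - 1) := Nat.one_le_two_pow
      omega
    have t3 : Nat.choose (6 * 2 ^ h - 3) (4 * 2 ^ h + 2 ^ s - 2) % 2 = 0 := by
      have hne : Nat.choose (6 * 2 ^ h - 3) (4 * 2 ^ h + 2 ^ s - 2) % 2 ≠ 1 := by
        intro H
        rw [lucas_parity] at H
        have hb : (4 * 2 ^ h + 2 ^ s - 2).testBit 1 = true := by
          rw [e3, Nat.testBit_two_pow_mul_add _ (by omega)]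
          have : (1:ℕ) < s := hs2
          simp only [this, if_true]
          rw [e4, Nat.testBit_two_pow_mul_add _ (by norm_num)]
          simp only [Nat.lt_irrefl, if_false]
          rw [Nat.testBit_two_pow_sub_one]
          simp; omega
        have := H _ hb
        rw [bitN _ _ hh] at this
        simp at this
      omega
    unfold Nat.ModEq
    omega
end

section
/- Let λ ≥ 0 be an integer and let r ≥ 1 be an odd integer. Then Σ_{j=0}^{2^λ} C(2^λ·(r+1), j) is odd. -/
lemma even_choose_aux_s10 : ∀ (l m j : ℕ), 1 ≤ j → j ≤ 2 ^ l →
    2 ∣ Nat.choose (2 ^ (l + 1) * m) j := by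
  intro l
  induction l with
  | zero =>
    intro m j h1 h2
    have hj : j = 1 := le_antisymm (by simpa using h2) h1
    subst hj
    rw [Nat.choose_one_right]
    exact Dvd.dvd.mul_right (dvd_pow_self 2 one_ne_zero) m
  | succ l ih =>
    intro m j h1 h2
    have : Fact (Nat.Prime 2) := ⟨Nat.prime_two⟩
    have hl := Choose.choose_modEq_choose_mod_mul_choose_div_nat
      (n := 2 ^ (l + 1 + 1) * m) (k := j) (p := 2)
    have h2eq : 2 ^ (l + 1 + 1) * m = 2 * (2 ^ (l + 1) * m) := by ring
    have hmod : (2 ^ (l + 1 + 1) * m) % 2 = 0 := by omega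
    have hdiv : (2 ^ (l + 1 + 1) * m) / 2 = 2 ^ (l + 1) * m := by omega
    rw [hmod, hdiv] at hl
    have hp : (2:ℕ) ^ (l + 1) = 2 * 2 ^ l := by ring
    rcases Nat.even_or_odd j with he | ho
    · have hmod2 : j % 2 = 0 := Nat.even_iff.mp he
      rw [hmod2] at hl
      obtain ⟨c, hc⟩ := ih m (j / 2) (by omega) (by omega)
      unfold Nat.ModEq at hl
      simp at hl
      omega
    · have hmod2 : j % 2 = 1 := Nat.odd_iff.mp ho
      rw [hmod2] at hl
      simp [Nat.choose_eq_zero_of_lt] at hl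
      unfold Nat.ModEq at hl
      omega

/-- For `λ ≥ 0` and odd `r ≥ 1`, the sum `∑_{j=0}^{2^λ} C(2^λ·(r+1), j)` is odd. -/
theorem sum_choose_odd (l r : ℕ) (hr1 : 1 ≤ r) (hr : Odd r) :
    Odd (∑ j ∈ Finset.range (2 ^ l + 1), Nat.choose (2 ^ l * (r + 1)) j) := by
  obtain ⟨m, hm⟩ := hr
  have hr2 : r + 1 = 2 * (m + 1) := by omega
  have hn : 2 ^ l * (r + 1) = 2 ^ (l + 1) * (m + 1) := by
    rw [hr2, pow_succ]; ring
  rw [Finset.sum_range_succ']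
  have heven : Even (∑ i ∈ Finset.range (2 ^ l), Nat.choose (2 ^ l * (r + 1)) (i + 1)) := by
    apply Finset.even_sum
    intro i hi
    rw [hn]
    simp only [Finset.mem_range] at hi
    obtain ⟨c, hc⟩ := even_choose_aux_s10 l (m + 1) (i + 1) (by omega) (by omega)
    exact ⟨c, by omega⟩
  simp only [Nat.choose_zero_right]
  exact heven.add_one
end

section
/- Let g ≥ 2, h ≥ 1, set q = 2^h, let c be an integer with 1 ≤ c ≤ g-1, and set i = 2^g - 1 - 2^c. Then C(2q·(i+2) + 2q - 2, 2q) is odd, and for every integer j with 0 ≤ j ≤ i one has C(2q·(i+2) + 2q - 2, 2q·(j+1) + 2q - 2) ≡ C(i+2, j+1) (mod 2). -/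
open Nat

lemma choose_split_two_pow : ∀ (k a b c d : ℕ), b < 2 ^ k → d < 2 ^ k →
    Nat.choose (a * 2 ^ k + b) (c * 2 ^ k + d) ≡ Nat.choose a c * Nat.choose b d [MOD 2] := by
  intro k
  induction k with
  | zero =>
    intro a b c d hb hd
    interval_cases b <;> interval_cases d <;> simp [Nat.ModEq.refl]
  | succ k ih =>
    intro a b c d hb hd
    have h2 : Fact (Nat.Prime 2) := ⟨Nat.prime_two⟩
    have key := @Choose.choose_modEq_choose_mod_mul_choose_div_nat
      (a * 2 ^ (k+1) + b) (c * 2 ^ (k+1) + d) 2 h2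
    have ea : a * 2 ^ (k+1) = 2 * (a * 2 ^ k) := by ring
    have ec : c * 2 ^ (k+1) = 2 * (c * 2 ^ k) := by ring
    have hmodn : (a * 2 ^ (k+1) + b) % 2 = b % 2 := by rw [ea]; omega
    have hmodk : (c * 2 ^ (k+1) + d) % 2 = d % 2 := by rw [ec]; omega
    have hdivn : (a * 2 ^ (k+1) + b) / 2 = a * 2 ^ k + b / 2 := by rw [ea]; omega
    have hdivk : (c * 2 ^ (k+1) + d) / 2 = c * 2 ^ k + d / 2 := by rw [ec]; omega
    rw [hmodn, hmodk, hdivn, hdivk] at key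
    have hb' : b / 2 < 2 ^ k := by rw [pow_succ] at hb; omega
    have hd' : d / 2 < 2 ^ k := by rw [pow_succ] at hd; omega
    have key2 := (Nat.ModEq.refl (Nat.choose (b % 2) (d % 2))).mul (ih a (b/2) c (d/2) hb' hd')
    have key3 := @Choose.choose_modEq_choose_mod_mul_choose_div_nat b d 2 h2
    calc Nat.choose (a * 2 ^ (k+1) + b) (c * 2 ^ (k+1) + d)
        ≡ Nat.choose (b % 2) (d % 2) * (Nat.choose a c * Nat.choose (b/2) (d/2)) [MOD 2] :=
          key.trans key2
      _ = Nat.choose a c * (Nat.choose (b % 2) (d % 2) * Nat.choose (b/2) (d/2)) := by ring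
      _ ≡ Nat.choose a c * Nat.choose b d [MOD 2] :=
          (Nat.ModEq.refl _).mul key3.symm

/-- For `g ≥ 2`, `q = 2^h`, `1 ≤ c ≤ g-1` and `i = 2^g - 1 - 2^c`:
`C(2q(i+2) + 2q - 2, 2q)` is odd and, for all `0 ≤ j ≤ i`,
`C(2q(i+2) + 2q - 2, 2q(j+1) + 2q - 2) ≡ C(i+2, j+1) (mod 2)`. -/
theorem choose_odd_and_congr (g h q c i : ℕ) (hg : 2 ≤ g) (hh : 1 ≤ h) (hq : q = 2 ^ h)
    (hc1 : 1 ≤ c) (hc2 : c ≤ g - 1) (hi : i = 2 ^ g - 1 - 2 ^ c) :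
    Odd (Nat.choose (2 * q * (i + 2) + 2 * q - 2) (2 * q)) ∧
    ∀ j ≤ i, Nat.choose (2 * q * (i + 2) + 2 * q - 2) (2 * q * (j + 1) + 2 * q - 2) ≡
      Nat.choose (i + 2) (j + 1) [MOD 2] := by
  have hq2 : 2 ≤ q := by
    rw [hq]
    calc 2 = 2 ^ 1 := rfl
    _ ≤ 2 ^ h := Nat.pow_le_pow_right (by norm_num) hh
  have hqq : 2 * q = 2 ^ (h + 1) := by rw [hq, pow_succ]; ring
  have hlt : 2 * q - 2 < 2 ^ (h + 1) := by omega
  -- i is odd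
  have hcg : 2 ^ c < 2 ^ g := Nat.pow_lt_pow_right (by norm_num) (by omega)
  have hiodd : i % 2 = 1 := by
    have h1 : 2 ^ g = 2 * 2 ^ (g - 1) := by
      conv_lhs => rw [show g = (g-1)+1 by omega]
      ring
    have h2 : 2 ^ c = 2 * 2 ^ (c - 1) := by
      conv_lhs => rw [show c = (c-1)+1 by omega]
      ring
    omega
  have hN : 2 * q * (i + 2) + 2 * q - 2 = (i + 2) * (2 * q) + (2 * q - 2) := by
    rw [mul_comm (2 * q) (i + 2), Nat.add_sub_assoc (by omega)]
  constructor
  · have key := choose_split_two_pow (h + 1) (i + 2) (2 * q - 2) 1 0 hlt (by positivity)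
    rw [one_mul, add_zero, Nat.choose_one_right, Nat.choose_zero_right, mul_one] at key
    rw [← hqq] at key
    have k2 : Nat.choose ((i + 2) * (2 * q) + (2 * q - 2)) (2 * q) % 2
        = (i + 2) % 2 := key
    rw [Nat.odd_iff, hN, k2]
    omega
  · intro j hj
    have key := choose_split_two_pow (h + 1) (i + 2) (2 * q - 2) (j + 1) (2 * q - 2) hlt hlt
    have hK : 2 * q * (j + 1) + 2 * q - 2 = (j + 1) * (2 * q) + (2 * q - 2) := by
      rw [mul_comm (2 * q) (j + 1), Nat.add_sub_assoc (by omega)]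
    rw [← hqq] at key
    rw [hN, hK]
    simpa using key
end
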